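/- For N ≥ 2 and p > 0, let f ∈ L^p(𝕋, λ) satisfy f(η^N)^N = Π_{ζ^N=1} f(ζη) for λ-almost all η ∈ 𝕋. Then |f| is constant λ-almost everywhere. -/

import Mathlib

open MeasureTheory

lemma amgm_eq_case {N : ℕ} (hN : 0 < N) (a : ℕ → ℝ)
    (ha : ∀ k ∈ Finset.range N, 0 ≤ a k)
    (h : ∑ k ∈ Finset.range N, (1 / N : ℝ) * a k ≤ ∏ k ∈ Finset.range N, a k ^ (1 / N : ℝ)) :
    ∀ j ∈ Finset.range N, ∀ k ∈ Finset.range N, a j = a k := by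
  have hNR : (0:ℝ) < N := by exact_mod_cast hN
  have hw : (0:ℝ) < 1 / N := by positivity
  by_cases hz : ∃ k ∈ Finset.range N, a k = 0
  · obtain ⟨k₀, hk₀, hak₀⟩ := hz
    have hprod : ∏ k ∈ Finset.range N, a k ^ (1 / N : ℝ) = 0 := by
      refine Finset.prod_eq_zero hk₀ ?_
      rw [hak₀, Real.zero_rpow hw.ne']
    have hsum : ∑ k ∈ Finset.range N, (1 / N : ℝ) * a k = 0 := by
      refine le_antisymm (hprod ▸ h) ?_
      exact Finset.sum_nonneg fun i hi => mul_nonneg hw.le (ha i hi)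
    have hall : ∀ i ∈ Finset.range N, a i = 0 := by
      intro i hi
      have h1 := (Finset.sum_eq_zero_iff_of_nonneg
        (fun j hj => mul_nonneg hw.le (ha j hj))).1 hsum i hi
      exact (mul_eq_zero.1 h1).resolve_left hw.ne'
    intro j hj k hk; rw [hall j hj, hall k hk]
  · push_neg at hz
    have hpos : ∀ k ∈ Finset.range N, 0 < a k :=
      fun k hk => (ha k hk).lt_of_ne' (hz k hk)
    have hsumpos : 0 < ∑ k ∈ Finset.range N, (1 / N : ℝ) * a k := by
      refine Finset.sum_pos (fun i hi => mul_pos hw (hpos i hi)) ?_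
      exact Finset.nonempty_range_iff.2 hN.ne'
    have hlog : Real.log (∑ k ∈ Finset.range N, (1 / N : ℝ) * a k)
        ≤ ∑ k ∈ Finset.range N, (1 / N : ℝ) * Real.log (a k) := by
      calc Real.log (∑ k ∈ Finset.range N, (1 / N : ℝ) * a k)
          ≤ Real.log (∏ k ∈ Finset.range N, a k ^ (1 / N : ℝ)) :=
            Real.log_le_log hsumpos h
        _ = ∑ k ∈ Finset.range N, Real.log (a k ^ (1 / N : ℝ)) := by
            refine Real.log_prod fun i hi => ?_
            exact (Real.rpow_pos_of_pos (hpos i hi) _).ne'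
        _ = ∑ k ∈ Finset.range N, (1 / N : ℝ) * Real.log (a k) := by
            refine Finset.sum_congr rfl fun i hi => ?_
            rw [Real.log_rpow (hpos i hi)]
    have h₁ : ∑ _k ∈ Finset.range N, (1 / N : ℝ) = 1 := by
      rw [Finset.sum_const, Finset.card_range, nsmul_eq_mul]
      field_simp
    exact strictConcaveOn_log_Ioi.eq_of_map_sum_eq
      (w := fun _ => (1 / N : ℝ)) (p := a) (t := Finset.range N)
      (fun i _ => hw) h₁ (fun i hi => hpos i hi) (by simpa [smul_eq_mul] using hlog)

/-- For `N ≥ 2` and `p > 0`, if `f ∈ L^p` of the circle (modelled as `ℝ/ℤ` with Haar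
probability measure) satisfies `f(η^N)^N = Π_{ζ^N=1} f(ζη)` for a.e. `η`
(additively: `f(N•η)^N = Π_{k<N} f(η + k/N)`), then `|f|` is a.e. constant. -/
theorem stmt_5 (N : ℕ) (hN : 2 ≤ N) (p : ℝ) (hp : 0 < p) (f : UnitAddCircle → ℂ)
    (hf : MemLp f (ENNReal.ofReal p) (volume : Measure UnitAddCircle))
    (heq : ∀ᵐ η : UnitAddCircle ∂volume,
      f (N • η) ^ N = ∏ k ∈ Finset.range N, f (η + (((k : ℝ) / N : ℝ) : UnitAddCircle))) :
    ∃ c : ℝ, ∀ᵐ η : UnitAddCircle ∂volume, ‖f η‖ = c := by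
  have hN0 : 0 < N := by omega
  have hNR : (0:ℝ) < N := by exact_mod_cast hN0
  set μ : Measure UnitAddCircle := volume with hμ
  set G : UnitAddCircle → ℝ := fun η => ‖f η‖ ^ p with hGdef
  have hG0 : ∀ η, 0 ≤ G η := fun η => Real.rpow_nonneg (norm_nonneg _) _
  have hGint : Integrable G μ := by
    have h := hf.integrable_norm_rpow (ENNReal.ofReal_pos.2 hp).ne' ENNReal.ofReal_ne_top
    simpa [hGdef, ENNReal.toReal_ofReal hp.le] using h
  have hGsm : AEStronglyMeasurable G μ := hGint.aestronglyMeasurable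
  set c : ℕ → UnitAddCircle := fun k => (((k : ℝ) / N : ℝ) : UnitAddCircle) with hc
  have hmpT : ∀ k, MeasurePreserving (fun η : UnitAddCircle => η + c k) μ μ :=
    fun k => measurePreserving_add_right μ (c k)
  have hTint : ∀ k, Integrable (fun η => G (η + c k)) μ := fun k =>
    ((hmpT k).integrable_comp hGsm).2 hGint
  have hTig : ∀ k, ∫ η, G (η + c k) ∂μ = ∫ η, G η ∂μ := fun k =>
    (hmpT k).integral_comp (MeasurableEquiv.addRight (c k)).measurableEmbedding G
  have hE : Ergodic (fun η : UnitAddCircle => N • η) μ :=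
    AddCircle.ergodic_nsmul (by exact_mod_cast hN)
  have hmpS : MeasurePreserving (fun η : UnitAddCircle => N • η) μ μ := hE.toMeasurePreserving
  have hSint : Integrable (fun η => G (N • η)) μ := (hmpS.integrable_comp hGsm).2 hGint
  have hSig : ∫ η, G (N • η) ∂μ = ∫ η, G η ∂μ := by
    have h1 := integral_map (f := G) hmpS.measurable.aemeasurable
      (by rwa [hmpS.map_eq])
    rw [hmpS.map_eq] at h1
    exact h1.symm
  set GM : UnitAddCircle → ℝ := fun η => ∏ k ∈ Finset.range N, (G (η + c k)) ^ ((1:ℝ)/N)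
    with hGM
  set A : UnitAddCircle → ℝ := fun η => ∑ k ∈ Finset.range N, ((1:ℝ)/N) * G (η + c k) with hA
  have hsumw : ∑ _k ∈ Finset.range N, ((1:ℝ)/N) = 1 := by
    rw [Finset.sum_const, Finset.card_range, nsmul_eq_mul]; field_simp
  have hGMA : ∀ η, GM η ≤ A η := fun η =>
    Real.geom_mean_le_arith_mean_weighted (Finset.range N) _ _ (fun i _ => by positivity)
      hsumw (fun i _ => hG0 _)
  have hGM_eq : ∀ᵐ η ∂μ, GM η = G (N • η) := by
    filter_upwards [heq] with η hη
    have hnorm : ‖f (N • η)‖ ^ N = ∏ k ∈ Finset.range N, ‖f (η + c k)‖ := by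
      calc ‖f (N • η)‖ ^ N = ‖f (N • η) ^ N‖ := (norm_pow _ _).symm
        _ = ∏ k ∈ Finset.range N, ‖f (η + c k)‖ := by rw [hη, norm_prod]
    have h1 : G (N • η) = (∏ k ∈ Finset.range N, ‖f (η + c k)‖) ^ ((1:ℝ)/N * p) := by
      rw [← hnorm, hGdef]
      rw [← Real.rpow_natCast ‖f (N • η)‖ N, ← Real.rpow_mul (norm_nonneg _)]
      field_simp
    rw [h1, ← Real.finset_prod_rpow _ _ (fun i _ => norm_nonneg _) _]
    simp only [hGM, hGdef]
    refine Finset.prod_congr rfl fun i _ => ?_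
    rw [← Real.rpow_mul (norm_nonneg _), mul_comm]
  have hGMint : Integrable GM μ := hSint.congr (hGM_eq.mono fun _ h => h.symm)
  have hAint : Integrable A μ := by
    simp only [hA]
    exact integrable_finset_sum _ fun k _ => (hTint k).const_mul _
  have hintGM : ∫ η, GM η ∂μ = ∫ η, G η ∂μ := by
    rw [integral_congr_ae hGM_eq]; exact hSig
  have hintA : ∫ η, A η ∂μ = ∫ η, G η ∂μ := by
    simp only [hA]
    rw [integral_finset_sum _ fun k _ => (hTint k).const_mul _]
    simp_rw [integral_const_mul, hTig]
    rw [Finset.sum_const, Finset.card_range, nsmul_eq_mul]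
    field_simp
  have hAeqGM : ∀ᵐ η ∂μ, A η = GM η := by
    have h0 : 0 ≤ᵐ[μ] fun η => A η - GM η :=
      Filter.Eventually.of_forall fun η => sub_nonneg.2 (hGMA η)
    have hint0 : ∫ η, (A η - GM η) ∂μ = 0 := by
      rw [integral_sub hAint hGMint, hintA, hintGM, sub_self]
    have h2 := (integral_eq_zero_iff_of_nonneg_ae h0 (hAint.sub hGMint)).1 hint0
    filter_upwards [h2] with η hη
    have : A η - GM η = 0 := hη
    linarith
  have hc0 : c 0 = 0 := by simp [hc]
  have hrot : ∀ᵐ η ∂μ, ∀ k ∈ Finset.range N, G (η + c k) = G η := by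
    filter_upwards [hAeqGM] with η hη
    have hallEq := amgm_eq_case hN0 (fun k => G (η + c k)) (fun k _ => hG0 _)
      (le_of_eq (by simpa [hA, hGM] using hη))
    intro k hk
    have h0mem : 0 ∈ Finset.range N := Finset.mem_range.2 hN0
    have h2 := hallEq k hk 0 h0mem
    simpa [hc0] using h2
  have hinv : ∀ᵐ η ∂μ, G (N • η) = G η := by
    filter_upwards [hGM_eq, hrot] with η h1 h2
    rw [← h1]
    have h3 : GM η = ∏ _k ∈ Finset.range N, (G η) ^ ((1:ℝ)/N) := by
      simp only [hGM]
      exact Finset.prod_congr rfl fun k hk => by rw [h2 k hk]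
    rw [h3, Finset.prod_const, Finset.card_range,
      ← Real.rpow_natCast ((G η) ^ ((1:ℝ)/N)) N, ← Real.rpow_mul (hG0 η),
      one_div_mul_cancel hNR.ne', Real.rpow_one]
  obtain ⟨C, hC⟩ := hE.ae_eq_const_of_ae_eq_comp_ae hGsm hinv
  refine ⟨C ^ p⁻¹, ?_⟩
  filter_upwards [hC] with η hη
  have hGη : ‖f η‖ ^ p = C := hη
  calc ‖f η‖ = (‖f η‖ ^ p) ^ p⁻¹ := (Real.rpow_rpow_inv (norm_nonneg _) hp.ne').symm
    _ = C ^ p⁻¹ := by rw [hGη]
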